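/- Let G be a nice graph with n vertices, m edges, and maximum degree Δ. Then: ME^W(G) ≤ ML^W(G) ≤ m·ME^W(G); MV^W(G) ≤ ML^W(G); 2·ML^W(G) ≤ n·MV^W(G); and ME^W(G) ≤ MV^W(G) ≤ Δ·ME^W(G). -/

import Mathlib

open SimpleGraph Finset

variable {V : Type*}

/-- `W.inc u` is the number of edge-traversals of the walk `W` incident to `u`. -/
def SimpleGraph.Walk.inc [DecidableEq V] {G : SimpleGraph V} {a b : V}
    (W : G.Walk a b) (u : V) : ℕ :=
  (W.edges.filter (fun e => u ∈ e)).length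

/-- A walk `W` of `G` is irregularising if in the multigraph `G + W` no two
adjacent vertices have the same degree. -/
def SimpleGraph.Walk.Irregularising [Fintype V] [DecidableEq V] {G : SimpleGraph V}
    [DecidableRel G.Adj] {a b : V} (W : G.Walk a b) : Prop :=
  ∀ ⦃u v : V⦄, G.Adj u v → G.degree u + W.inc u ≠ G.degree v + W.inc v

/-- The vertex sum `σ_ℓ(u)` of a labelling. -/
def vertexSum [Fintype V] [DecidableEq V] (G : SimpleGraph V) [DecidableRel G.Adj]
    (ℓ : Sym2 V → ℕ) (u : V) : ℕ :=
  ∑ w ∈ G.neighborFinset u, ℓ s(u, w)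

/-- A labelling is proper if adjacent vertices get distinct sums. -/
def IsProperLabelling [Fintype V] [DecidableEq V] (G : SimpleGraph V) [DecidableRel G.Adj]
    (ℓ : Sym2 V → ℕ) : Prop :=
  ∀ ⦃u v : V⦄, G.Adj u v → vertexSum G ℓ u ≠ vertexSum G ℓ v

/-- Minimum length of an irregularising walk, as an extended natural number. -/
noncomputable def MLW [Fintype V] [DecidableEq V] (G : SimpleGraph V) [DecidableRel G.Adj] : ℕ∞ :=
  ⨅ (a : V) (b : V) (W : G.Walk a b) (_ : W.Irregularising), (W.length : ℕ∞)

/-- Infimum over irregularising walks of the maximum number of traversals of a single edge. -/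
noncomputable def MEW [Fintype V] [DecidableEq V] (G : SimpleGraph V) [DecidableRel G.Adj] : ℕ∞ :=
  ⨅ (a : V) (b : V) (W : G.Walk a b) (_ : W.Irregularising),
    ((W.edges.toFinset.sup fun e => W.edges.count e : ℕ) : ℕ∞)

/-- Infimum over irregularising walks of `max_u inc_W(u)`. -/
noncomputable def MVW [Fintype V] [DecidableEq V] (G : SimpleGraph V) [DecidableRel G.Adj] : ℕ∞ :=
  ⨅ (a : V) (b : V) (W : G.Walk a b) (_ : W.Irregularising),
    ((Finset.univ.sup fun u => W.inc u : ℕ) : ℕ∞)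

section aux

lemma list_sum_count {α : Type*} [DecidableEq α] (l : List α) :
    ∑ e ∈ l.toFinset, l.count e = l.length := by
  simpa using Multiset.toFinset_sum_count_eq (l : Multiset α)

variable [Fintype V] [DecidableEq V] {G : SimpleGraph V} [DecidableRel G.Adj]

-- abbreviations for the three walk parameters
private abbrev Epar {a b : V} (W : G.Walk a b) : ℕ := W.edges.toFinset.sup fun e => W.edges.count e
private abbrev Vpar [Fintype V] {a b : V} (W : G.Walk a b) : ℕ := Finset.univ.sup fun u => W.inc u

lemma inc_cons {a b c : V} (h : G.Adj a b) (p : G.Walk b c) (u : V) :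
    (SimpleGraph.Walk.cons h p).inc u = (if u ∈ s(a,b) then 1 else 0) + p.inc u := by
  simp only [SimpleGraph.Walk.inc, SimpleGraph.Walk.edges_cons, List.filter_cons]
  split_ifs <;> simp_all <;> omega

lemma sum_inc {a b : V} (W : G.Walk a b) : ∑ u, W.inc u = 2 * W.length := by
  induction W with
  | nil => simp [SimpleGraph.Walk.inc]
  | @cons x y c h p ih =>
    have hfil : (Finset.univ.filter (fun u => u ∈ s(x,y))) = {x, y} := by
      ext z; simp [Sym2.mem_iff]
    have hcard : ({x, y} : Finset V).card = 2 := by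
      rw [Finset.card_insert_of_notMem (by simp [h.ne]), Finset.card_singleton]
    simp only [inc_cons, Finset.sum_add_distrib, ih, SimpleGraph.Walk.length_cons]
    have : (∑ u : V, if u ∈ s(x,y) then (1:ℕ) else 0) = 2 := by
      rw [← Finset.sum_filter, hfil]
      simp [hcard]
    omega

lemma E_le_L {a b : V} (W : G.Walk a b) : Epar W ≤ W.length := by
  apply Finset.sup_le
  intro e _
  simpa [SimpleGraph.Walk.length_edges] using (List.count_le_length (a := e) (l := W.edges))

lemma L_le_mE {a b : V} (W : G.Walk a b) : W.length ≤ G.edgeFinset.card * Epar W := by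
  have h1 : W.length = ∑ e ∈ W.edges.toFinset, W.edges.count e := by
    rw [list_sum_count, SimpleGraph.Walk.length_edges]
  have h2 : W.edges.toFinset ⊆ G.edgeFinset := by
    intro e he
    rw [List.mem_toFinset] at he
    exact SimpleGraph.mem_edgeFinset.mpr (W.edges_subset_edgeSet he)
  calc W.length = ∑ e ∈ W.edges.toFinset, W.edges.count e := h1
    _ ≤ W.edges.toFinset.card • Epar W :=
        Finset.sum_le_card_nsmul _ _ _ (fun e he => Finset.le_sup (f := fun e => W.edges.count e) he)
    _ ≤ G.edgeFinset.card * Epar W := by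
        simpa [smul_eq_mul] using Nat.mul_le_mul_right (Epar W) (Finset.card_le_card h2)

lemma V_le_L {a b : V} (W : G.Walk a b) : Vpar W ≤ W.length := by
  apply Finset.sup_le
  intro u _
  simpa [SimpleGraph.Walk.inc, SimpleGraph.Walk.length_edges] using
    List.length_filter_le (fun e => decide (u ∈ e)) W.edges

lemma twoL_le_nV {a b : V} (W : G.Walk a b) : 2 * W.length ≤ Fintype.card V * Vpar W := by
  rw [← sum_inc]
  calc ∑ u, W.inc u ≤ Finset.univ.card • Vpar W :=
        Finset.sum_le_card_nsmul _ _ _ (fun u _ => Finset.le_sup (Finset.mem_univ u))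
    _ = Fintype.card V * Vpar W := by simp [smul_eq_mul]

lemma E_le_V {a b : V} (W : G.Walk a b) : Epar W ≤ Vpar W := by
  apply Finset.sup_le
  intro e he
  rw [List.mem_toFinset] at he
  induction e with
  | _ u v =>
    have : W.edges.count s(u,v) ≤ W.inc u := by
      rw [SimpleGraph.Walk.inc, List.count, ← List.countP_eq_length_filter]
      apply List.countP_mono_left
      intro e _ h
      simp only [beq_iff_eq] at h
      subst h
      simp [Sym2.mem_iff]
    exact this.trans (Finset.le_sup (Finset.mem_univ u))

lemma V_le_dE {a b : V} (W : G.Walk a b) : Vpar W ≤ G.maxDegree * Epar W := by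
  apply Finset.sup_le
  intro u _
  set l := W.edges with hl
  set lf := l.filter (fun e => decide (u ∈ e)) with hlf
  have hsub : lf.toFinset ⊆ G.incidenceFinset u := by
    intro e he
    rw [List.mem_toFinset, hlf, List.mem_filter] at he
    rw [SimpleGraph.mem_incidenceFinset]
    exact ⟨W.edges_subset_edgeSet he.1, by simpa using he.2⟩
  have hcard : lf.toFinset.card ≤ G.degree u := by
    rw [← SimpleGraph.card_incidenceFinset_eq_degree]
    exact Finset.card_le_card hsub
  have key : W.inc u = ∑ e ∈ lf.toFinset, lf.count e := by
    rw [list_sum_count]; rfl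
  calc W.inc u = ∑ e ∈ lf.toFinset, lf.count e := key
    _ ≤ lf.toFinset.card • Epar W := by
        apply Finset.sum_le_card_nsmul
        intro e he
        have hel : e ∈ l := List.mem_of_mem_filter (List.mem_toFinset.mp he)
        calc lf.count e ≤ l.count e := (List.filter_sublist (l := l)).count_le e
          _ ≤ Epar W := Finset.le_sup (f := fun e => l.count e) (List.mem_toFinset.mpr hel)
    _ ≤ G.maxDegree * Epar W := by
        simp only [smul_eq_mul]
        exact Nat.mul_le_mul_right _ (hcard.trans (G.degree_le_maxDegree u))

-- key infimum lemma
lemma key_le {F Gf : ∀ a b : V, G.Walk a b → ℕ} {c d : ℕ}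
    (hB : ∃ (a b : V) (W : G.Walk a b), W.Irregularising)
    (h : ∀ (a b : V) (W : G.Walk a b), W.Irregularising → d * F a b W ≤ c * Gf a b W) :
    (d : ℕ∞) * (⨅ (a : V) (b : V) (W : G.Walk a b) (_ : W.Irregularising), (F a b W : ℕ∞)) ≤
      (c : ℕ∞) * ⨅ (a : V) (b : V) (W : G.Walk a b) (_ : W.Irregularising), (Gf a b W : ℕ∞) := by
  classical
  set S : Set ℕ := {n | ∃ (a b : V) (W : G.Walk a b), W.Irregularising ∧ Gf a b W = n} with hS
  have hSne : S.Nonempty := by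
    obtain ⟨a, b, W, hW⟩ := hB
    exact ⟨Gf a b W, a, b, W, hW, rfl⟩
  obtain ⟨a0, b0, W0, hW0, hGf0⟩ := Nat.sInf_mem hSne
  have hmin : ∀ (a b : V) (W : G.Walk a b), W.Irregularising → Gf a0 b0 W0 ≤ Gf a b W := by
    intro a b W hW
    rw [hGf0]
    exact Nat.sInf_le ⟨a, b, W, hW, rfl⟩
  have hinfG : (⨅ (a : V) (b : V) (W : G.Walk a b) (_ : W.Irregularising), (Gf a b W : ℕ∞))
      = (Gf a0 b0 W0 : ℕ∞) := by
    apply le_antisymm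
    · exact iInf_le_of_le a0 (iInf_le_of_le b0 (iInf_le_of_le W0 (iInf_le _ hW0)))
    · refine le_iInf fun a => le_iInf fun b => le_iInf fun W => le_iInf fun hW => ?_
      exact_mod_cast hmin a b W hW
  rw [hinfG]
  have h1 : (⨅ (a : V) (b : V) (W : G.Walk a b) (_ : W.Irregularising), (F a b W : ℕ∞))
      ≤ (F a0 b0 W0 : ℕ∞) :=
    iInf_le_of_le a0 (iInf_le_of_le b0 (iInf_le_of_le W0 (iInf_le _ hW0)))
  calc (d : ℕ∞) * _ ≤ (d : ℕ∞) * (F a0 b0 W0 : ℕ∞) := mul_le_mul' le_rfl h1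
    _ ≤ (c : ℕ∞) * (Gf a0 b0 W0 : ℕ∞) := by
        rw [← Nat.cast_mul, ← Nat.cast_mul]
        exact_mod_cast h a0 b0 W0 hW0

end aux

/-- relationships between the irregularising walk parameters for a nice graph
`G` with `n` vertices, `m` edges and maximum degree `Δ`:
`ME ≤ ML ≤ m·ME`, `MV ≤ ML`, `2·ML ≤ n·MV`, and `ME ≤ MV ≤ Δ·ME`. -/
theorem stmt_3 {V : Type*} [Fintype V] [DecidableEq V] (G : SimpleGraph V)
    [DecidableRel G.Adj] (hconn : G.Connected)
    (hK2 : ¬ Nonempty (G ≃g (⊤ : SimpleGraph (Fin 2)))) :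
    MEW G ≤ MLW G ∧ MLW G ≤ (G.edgeFinset.card : ℕ∞) * MEW G ∧
    MVW G ≤ MLW G ∧ 2 * MLW G ≤ (Fintype.card V : ℕ∞) * MVW G ∧
    MEW G ≤ MVW G ∧ MVW G ≤ (G.maxDegree : ℕ∞) * MEW G := by
  classical
  have hmono1 : MEW G ≤ MLW G := by
    refine iInf_mono fun a => iInf_mono fun b => iInf_mono fun W => iInf_mono fun _ => ?_
    exact_mod_cast E_le_L W
  have hmono2 : MVW G ≤ MLW G := by
    refine iInf_mono fun a => iInf_mono fun b => iInf_mono fun W => iInf_mono fun _ => ?_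
    exact_mod_cast V_le_L W
  have hmono3 : MEW G ≤ MVW G := by
    refine iInf_mono fun a => iInf_mono fun b => iInf_mono fun W => iInf_mono fun _ => ?_
    exact_mod_cast E_le_V W
  by_cases hB : ∃ (a b : V) (W : G.Walk a b), W.Irregularising
  · refine ⟨hmono1, ?_, hmono2, ?_, hmono3, ?_⟩
    · have := key_le (G := G) (F := fun a b W => W.length) (Gf := fun a b W => Epar W)
        (c := G.edgeFinset.card) (d := 1) hB (fun a b W _ => by simpa using L_le_mE W)
      simpa [MLW, MEW, Epar] using this
    · have := key_le (G := G) (F := fun a b W => W.length) (Gf := fun a b W => Vpar W)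
        (c := Fintype.card V) (d := 2) hB (fun a b W _ => twoL_le_nV W)
      simpa [MLW, MVW, Vpar] using this
    · have := key_le (G := G) (F := fun a b W => Vpar W) (Gf := fun a b W => Epar W)
        (c := G.maxDegree) (d := 1) hB (fun a b W _ => by simpa using V_le_dE W)
      simpa [MVW, MEW, Epar, Vpar] using this
  · push_neg at hB
    have hne : Nonempty V := hconn.nonempty
    -- G has an edge
    have hedge : ∃ u v, G.Adj u v := by
      by_contra hno
      push_neg at hno
      obtain ⟨a⟩ := hne
      exact hB a a SimpleGraph.Walk.nil (fun u v huv => absurd huv (hno u v))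
    obtain ⟨u, v, huv⟩ := hedge
    have hm : G.edgeFinset.card ≠ 0 := by
      rw [Finset.card_ne_zero]
      exact ⟨s(u,v), SimpleGraph.mem_edgeFinset.mpr huv⟩
    have hΔ : G.maxDegree ≠ 0 := by
      have h1 : 0 < G.degree u := (SimpleGraph.degree_pos_iff_exists_adj G u).mpr ⟨v, huv⟩
      have h2 := G.degree_le_maxDegree u
      omega
    have hML : MLW G = ⊤ := by
      simp only [MLW, iInf_eq_top]
      intro a b W hW
      exact absurd hW (hB a b W)
    have hME : MEW G = ⊤ := by
      simp only [MEW, iInf_eq_top]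
      intro a b W hW
      exact absurd hW (hB a b W)
    have hMV : MVW G = ⊤ := by
      simp only [MVW, iInf_eq_top]
      intro a b W hW
      exact absurd hW (hB a b W)
    have hn : (Fintype.card V : ℕ∞) ≠ 0 := by
      simp [Fintype.card_ne_zero]
    refine ⟨hmono1, ?_, hmono2, ?_, hmono3, ?_⟩
    · rw [hML, hME, ENat.mul_top (by exact_mod_cast hm)]
    · rw [hML, hMV, ENat.mul_top hn]
      exact le_top
    · rw [hMV, hME, ENat.mul_top (by exact_mod_cast hΔ)]
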